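/- Let n = p + q. For e ∈ {1,2} let Σ_{e1} be a p×p symmetric positive definite matrix, let d_e ∈ ℝ^q have strictly positive entries, let θ_e ∈ ℝ^q, and let γ ∈ ℝ^p. Set Σ_e = blockdiag(Σ_{e1}, diag(d_e)) and ρ_e = (Σ_{e1} γ, θ_e) ∈ ℝⁿ, and define the environment-e population loss R̄_e(w) = wᵀ Σ_e w − 2 ρ_eᵀ w for w ∈ ℝⁿ. Then for every mixture weight π ∈ [0,1], the function w ↦ π R̄₁(w) + (1−π) R̄₂(w) has a unique minimizer over ℝⁿ, equal to (γ, v) where for each k ∈ {1,…,q}, v_k = (π θ_{1,k} + (1−π) θ_{2,k}) / (π d_{1,k} + (1−π) d_{2,k}). (This is the solution learned by empirical risk minimization when the data is pooled across environments with proportions π and 1−π.) -/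

import Mathlib

open Matrix

private lemma quad_min {n : Type*} [Fintype n]
    (S : Matrix n n ℝ) (hsym : Sᵀ = S)
    (hpos : ∀ x : n → ℝ, x ≠ 0 → 0 < x ⬝ᵥ (S *ᵥ x))
    (ρ w' : n → ℝ) (heq : S *ᵥ w' = ρ) :
    (∀ u, (w' ⬝ᵥ (S *ᵥ w') - 2 * (ρ ⬝ᵥ w')) ≤ (u ⬝ᵥ (S *ᵥ u) - 2 * (ρ ⬝ᵥ u))) ∧
    (∀ w, (∀ u, (w ⬝ᵥ (S *ᵥ w) - 2 * (ρ ⬝ᵥ w)) ≤ (u ⬝ᵥ (S *ᵥ u) - 2 * (ρ ⬝ᵥ u))) → w = w') := by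
  have hcross : ∀ u : n → ℝ, u ⬝ᵥ (S *ᵥ w') = ρ ⬝ᵥ u := by
    intro u; rw [heq, dotProduct_comm]
  have hcross' : ∀ u : n → ℝ, w' ⬝ᵥ (S *ᵥ u) = ρ ⬝ᵥ u := by
    intro u
    rw [dotProduct_mulVec, ← mulVec_transpose, hsym, heq]
  have key : ∀ u : n → ℝ,
      (u ⬝ᵥ (S *ᵥ u) - 2 * (ρ ⬝ᵥ u)) - (w' ⬝ᵥ (S *ᵥ w') - 2 * (ρ ⬝ᵥ w'))
        = (u - w') ⬝ᵥ (S *ᵥ (u - w')) := by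
    intro u
    rw [mulVec_sub, dotProduct_sub, sub_dotProduct, sub_dotProduct,
      hcross u, hcross w', hcross' u]
    ring
  constructor
  · intro u
    have h1 := key u
    rcases eq_or_ne u w' with rfl | hne
    · exact le_rfl
    · have h2 := hpos (u - w') (sub_ne_zero.mpr hne)
      linarith
  · intro w hw
    by_contra hne
    have h1 := key w
    have h2 := hpos (w - w') (sub_ne_zero.mpr hne)
    have h3 := hw w'
    have h4 : (w' ⬝ᵥ (S *ᵥ w') - 2 * (ρ ⬝ᵥ w')) - (w ⬝ᵥ (S *ᵥ w) - 2 * (ρ ⬝ᵥ w)) = -((w - w') ⬝ᵥ (S *ᵥ (w - w'))) := by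
      rw [← key w]; ring
    linarith

/-- **pooled ERM solution.** With block-diagonal second moments
`Σ_e = blockdiag(Σ_{e1}, diag(d_e))`, cross moments `ρ_e = (Σ_{e1} γ, θ_e)`, and
environment losses `R̄_e(w) = wᵀ Σ_e w − 2 ρ_eᵀ w`, for every mixture weight
`π ∈ [0,1]` the pooled loss `π R̄₁ + (1−π) R̄₂` has the unique minimizer `(γ, v)`
where `v_k = (π θ_{1,k} + (1−π) θ_{2,k}) / (π d_{1,k} + (1−π) d_{2,k})`. -/
theorem pooled_erm_solution {p q : ℕ}
    (M₁ M₂ : Matrix (Fin p) (Fin p) ℝ) (hM₁ : M₁.PosDef) (hM₂ : M₂.PosDef)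
    (d₁ d₂ : Fin q → ℝ) (hd₁ : ∀ k, 0 < d₁ k) (hd₂ : ∀ k, 0 < d₂ k)
    (θ₁ θ₂ : Fin q → ℝ) (γ : Fin p → ℝ)
    (π : ℝ) (hπ : π ∈ Set.Icc (0 : ℝ) 1) :
    let S₁ : Matrix (Fin p ⊕ Fin q) (Fin p ⊕ Fin q) ℝ :=
      Matrix.fromBlocks M₁ 0 0 (Matrix.diagonal d₁)
    let S₂ : Matrix (Fin p ⊕ Fin q) (Fin p ⊕ Fin q) ℝ :=
      Matrix.fromBlocks M₂ 0 0 (Matrix.diagonal d₂)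
    let ρ₁ : Fin p ⊕ Fin q → ℝ := Sum.elim (M₁ *ᵥ γ) θ₁
    let ρ₂ : Fin p ⊕ Fin q → ℝ := Sum.elim (M₂ *ᵥ γ) θ₂
    let f : (Fin p ⊕ Fin q → ℝ) → ℝ := fun w =>
      π * (w ⬝ᵥ (S₁ *ᵥ w) - 2 * (ρ₁ ⬝ᵥ w)) + (1 - π) * (w ⬝ᵥ (S₂ *ᵥ w) - 2 * (ρ₂ ⬝ᵥ w))
    let wstar : Fin p ⊕ Fin q → ℝ :=
      Sum.elim γ (fun k => (π * θ₁ k + (1 - π) * θ₂ k) / (π * d₁ k + (1 - π) * d₂ k))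
    (∀ u, f wstar ≤ f u) ∧ (∀ w, (∀ u, f w ≤ f u) → w = wstar) := by
  intro S₁ S₂ ρ₁ ρ₂ f wstar
  obtain ⟨hπ0, hπ1⟩ := hπ
  have hπ1' : (0:ℝ) ≤ 1 - π := by linarith
  have hconv : ∀ A B : ℝ, 0 < A → 0 < B → 0 < π * A + (1 - π) * B := by
    intro A B hA hB
    nlinarith [mul_nonneg hπ0 (sub_nonneg.2 (min_le_left A B)),
      mul_nonneg hπ1' (sub_nonneg.2 (min_le_right A B)), lt_min hA hB]
  have hden : ∀ k, 0 < π * d₁ k + (1 - π) * d₂ k := fun k => hconv _ _ (hd₁ k) (hd₂ k)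
  set S : Matrix (Fin p ⊕ Fin q) (Fin p ⊕ Fin q) ℝ := π • S₁ + (1 - π) • S₂ with hS
  set ρ : Fin p ⊕ Fin q → ℝ := π • ρ₁ + (1 - π) • ρ₂ with hρ
  have hfeq : ∀ w, f w = w ⬝ᵥ (S *ᵥ w) - 2 * (ρ ⬝ᵥ w) := by
    intro w
    simp only [f, hS, hρ, add_mulVec, smul_mulVec, dotProduct_add, dotProduct_smul,
      add_dotProduct, smul_dotProduct, smul_eq_mul]
    ring
  have hsymgen : ∀ (M : Matrix (Fin p) (Fin p) ℝ), M.PosDef → ∀ d : Fin q → ℝ,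
      (Matrix.fromBlocks M 0 0 (Matrix.diagonal d))ᵀ
        = Matrix.fromBlocks M 0 0 (Matrix.diagonal d) := by
    intro M hM d
    have h1 : Mᵀ = M := by
      have := hM.1
      simpa [Matrix.IsHermitian] using this
    rw [Matrix.fromBlocks_transpose, Matrix.transpose_zero, Matrix.transpose_zero,
      Matrix.diagonal_transpose, h1]
  have hsym : Sᵀ = S := by
    rw [hS, Matrix.transpose_add, Matrix.transpose_smul, Matrix.transpose_smul]
    show π • (Matrix.fromBlocks M₁ 0 0 (Matrix.diagonal d₁))ᵀ + _ = _
    rw [hsymgen M₁ hM₁ d₁, hsymgen M₂ hM₂ d₂]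
  have hposgen : ∀ (M : Matrix (Fin p) (Fin p) ℝ), M.PosDef → ∀ d : Fin q → ℝ,
      (∀ k, 0 < d k) → ∀ x : Fin p ⊕ Fin q → ℝ, x ≠ 0 →
      0 < x ⬝ᵥ ((Matrix.fromBlocks M 0 0 (Matrix.diagonal d)) *ᵥ x) := by
    intro M hM d hd x hx
    have hab : x = Sum.elim (x ∘ Sum.inl) (x ∘ Sum.inr) := (Sum.elim_comp_inl_inr x).symm
    set a := x ∘ Sum.inl with ha
    set b := x ∘ Sum.inr with hb
    rw [Matrix.fromBlocks_mulVec]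
    simp only [Matrix.zero_mulVec, add_zero, zero_add, ← ha, ← hb]
    rw [hab, sumElim_dotProduct_sumElim]
    have hD : (Matrix.diagonal d).PosDef := Matrix.PosDef.diagonal hd
    have t1 : 0 ≤ a ⬝ᵥ (M *ᵥ a) := by
      have := hM.posSemidef.dotProduct_mulVec_nonneg a
      simpa using this
    have t2 : 0 ≤ b ⬝ᵥ (Matrix.diagonal d *ᵥ b) := by
      have := hD.posSemidef.dotProduct_mulVec_nonneg b
      simpa using this
    by_cases hA : a = 0
    · have hB : b ≠ 0 := by
        intro hB
        apply hx
        funext i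
        cases i with
        | inl j => exact congrFun hA j
        | inr k => exact congrFun hB k
      have := hD.dotProduct_mulVec_pos hB
      simp only [star_trivial] at this
      have t1' : a ⬝ᵥ (M *ᵥ a) = 0 := by rw [hA]; simp
      linarith
    · have := hM.dotProduct_mulVec_pos hA
      simp only [star_trivial] at this
      linarith
  have hpos : ∀ x : Fin p ⊕ Fin q → ℝ, x ≠ 0 → 0 < x ⬝ᵥ (S *ᵥ x) := by
    intro x hx
    have e : x ⬝ᵥ (S *ᵥ x) = π * (x ⬝ᵥ (S₁ *ᵥ x)) + (1 - π) * (x ⬝ᵥ (S₂ *ᵥ x)) := by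
      simp only [hS, add_mulVec, smul_mulVec, dotProduct_add, dotProduct_smul,
        smul_eq_mul]
    rw [e]
    exact hconv _ _ (hposgen M₁ hM₁ d₁ hd₁ x hx) (hposgen M₂ hM₂ d₂ hd₂ x hx)
  have heq : S *ᵥ wstar = ρ := by
    funext i
    have h1 : S₁ *ᵥ wstar = Sum.elim (M₁ *ᵥ γ)
        (fun k => d₁ k * ((π * θ₁ k + (1 - π) * θ₂ k) / (π * d₁ k + (1 - π) * d₂ k))) := by
      show Matrix.fromBlocks M₁ 0 0 (Matrix.diagonal d₁) *ᵥ _ = _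
      rw [Matrix.fromBlocks_mulVec]
      simp [wstar, Matrix.mulVec_diagonal, funext_iff]
    have h2 : S₂ *ᵥ wstar = Sum.elim (M₂ *ᵥ γ)
        (fun k => d₂ k * ((π * θ₁ k + (1 - π) * θ₂ k) / (π * d₁ k + (1 - π) * d₂ k))) := by
      show Matrix.fromBlocks M₂ 0 0 (Matrix.diagonal d₂) *ᵥ _ = _
      rw [Matrix.fromBlocks_mulVec]
      simp [wstar, Matrix.mulVec_diagonal, funext_iff]
    rw [hS, Matrix.add_mulVec, Matrix.smul_mulVec, Matrix.smul_mulVec, h1, h2, hρ]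
    cases i with
    | inl j => simp [ρ₁, ρ₂]
    | inr k =>
      simp only [Pi.add_apply, Pi.smul_apply, Sum.elim_inr, smul_eq_mul, ρ₁, ρ₂]
      have hk := (hden k).ne'
      field_simp
  obtain ⟨hmin, huniq⟩ := quad_min S hsym hpos ρ wstar heq
  constructor
  · intro u
    rw [hfeq u, hfeq wstar]
    exact hmin u
  · intro w hw
    exact huniq w (fun u => by rw [← hfeq w, ← hfeq u]; exact hw u)
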